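/- Let a₁, a₂, a₃ : ℝ³ → ℝ be smooth functions of (x, t₁, t₂) satisfying ∂_{t₁} a₁ = ∂_x[a₂ − a₁²], ∂_{t₁} a₂ = ∂_x[a₃ − a₁a₂], and ∂_{t₂} a₁ = ∂_x[a₃ − 2a₁a₂ + a₁³]. Then u := a₁ and w := a₂ − a₁² satisfy the (2+1)-dimensional hydrodynamic type system ∂_{t₁} u = ∂_x w and ∂_{t₂} u = ∂_{t₁} w + u ∂_x w − w ∂_x u. -/

import Mathlib

open Real Set

/-- Partial derivative in the first variable `x` of a function of `(x, t₁, t₂)`. -/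
noncomputable def dX (f : ℝ → ℝ → ℝ → ℝ) (x t1 t2 : ℝ) : ℝ := deriv (fun x' => f x' t1 t2) x

/-- Partial derivative in the second variable `t₁` of a function of `(x, t₁, t₂)`. -/
noncomputable def dT1 (f : ℝ → ℝ → ℝ → ℝ) (x t1 t2 : ℝ) : ℝ := deriv (fun s => f x s t2) t1

/-- Partial derivative in the third variable `t₂` of a function of `(x, t₁, t₂)`. -/
noncomputable def dT2 (f : ℝ → ℝ → ℝ → ℝ) (x t1 t2 : ℝ) : ℝ := deriv (fun s => f x t1 s) t2

lemma slice_diff (f : ℝ → ℝ → ℝ → ℝ)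
    (hf : ContDiff ℝ (⊤ : ℕ∞) (fun p : ℝ × ℝ × ℝ => f p.1 p.2.1 p.2.2)) (x t1 t2 : ℝ) :
    DifferentiableAt ℝ (fun x' => f x' t1 t2) x ∧
    DifferentiableAt ℝ (fun s => f x s t2) t1 := by
  have hF : Differentiable ℝ (fun p : ℝ × ℝ × ℝ => f p.1 p.2.1 p.2.2) :=
    hf.differentiable (by simp)
  constructor
  · exact (hF (x, t1, t2)).comp x (f := fun x' : ℝ => (x', t1, t2)) (differentiableAt_id.prodMk
      (differentiableAt_const _))
  · exact (hF (x, t1, t2)).comp t1 (f := fun s : ℝ => (x, s, t2)) ((differentiableAt_const _).prodMk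
      (differentiableAt_id.prodMk (differentiableAt_const _)))


/-- Eliminating `a₃` from the lowest equations of the hydrodynamic chain
`∂_{t₁}a_k = ∂ₓ[a_{k+1} − a₁a_k]` and its second commuting flow yields the
(2+1)-dimensional system `u_{t₁} = wₓ`, `u_{t₂} = w_{t₁} + u wₓ − w uₓ`
for `u = a₁`, `w = a₂ − a₁²`. -/
theorem new_2plus1_system_from_chain
    (a1 a2 a3 : ℝ → ℝ → ℝ → ℝ)
    (h1 : ContDiff ℝ (⊤ : ℕ∞) (fun p : ℝ × ℝ × ℝ => a1 p.1 p.2.1 p.2.2))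
    (h2 : ContDiff ℝ (⊤ : ℕ∞) (fun p : ℝ × ℝ × ℝ => a2 p.1 p.2.1 p.2.2))
    (h3 : ContDiff ℝ (⊤ : ℕ∞) (fun p : ℝ × ℝ × ℝ => a3 p.1 p.2.1 p.2.2))
    (e1 : ∀ x t1 t2 : ℝ,
      dT1 a1 x t1 t2 = dX (fun x' s1 s2 => a2 x' s1 s2 - (a1 x' s1 s2) ^ 2) x t1 t2)
    (e2 : ∀ x t1 t2 : ℝ,
      dT1 a2 x t1 t2 = dX (fun x' s1 s2 => a3 x' s1 s2 - a1 x' s1 s2 * a2 x' s1 s2) x t1 t2)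
    (e3 : ∀ x t1 t2 : ℝ,
      dT2 a1 x t1 t2
        = dX (fun x' s1 s2 =>
            a3 x' s1 s2 - 2 * a1 x' s1 s2 * a2 x' s1 s2 + (a1 x' s1 s2) ^ 3) x t1 t2)
    (u w : ℝ → ℝ → ℝ → ℝ)
    (hu : ∀ x t1 t2 : ℝ, u x t1 t2 = a1 x t1 t2)
    (hw : ∀ x t1 t2 : ℝ, w x t1 t2 = a2 x t1 t2 - (a1 x t1 t2) ^ 2) :
    (∀ x t1 t2 : ℝ, dT1 u x t1 t2 = dX w x t1 t2) ∧
    (∀ x t1 t2 : ℝ,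
      dT2 u x t1 t2
        = dT1 w x t1 t2 + u x t1 t2 * dX w x t1 t2 - w x t1 t2 * dX u x t1 t2) := by
  have hueq1 : ∀ x t2, (fun s => u x s t2) = (fun s => a1 x s t2) :=
    fun x t2 => funext fun s => hu x s t2
  have hueq2 : ∀ t1 t2, (fun x' => u x' t1 t2) = (fun x' => a1 x' t1 t2) :=
    fun t1 t2 => funext fun x' => hu x' t1 t2
  have hueq3 : ∀ x t1, (fun s => u x t1 s) = (fun s => a1 x t1 s) :=
    fun x t1 => funext fun s => hu x t1 s
  have hweq1 : ∀ x t2, (fun s => w x s t2) = (fun s => a2 x s t2 - a1 x s t2 ^ 2) :=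
    fun x t2 => funext fun s => hw x s t2
  have hweq2 : ∀ t1 t2, (fun x' => w x' t1 t2) = (fun x' => a2 x' t1 t2 - a1 x' t1 t2 ^ 2) :=
    fun t1 t2 => funext fun x' => hw x' t1 t2
  constructor
  · intro x t1 t2
    have E1 := e1 x t1 t2
    simp only [dT1, dX] at E1 ⊢
    rw [hueq1, hweq2]
    exact E1
  · intro x t1 t2
    obtain ⟨d1x, d1t1⟩ := slice_diff a1 h1 x t1 t2
    obtain ⟨d2x, d2t1⟩ := slice_diff a2 h2 x t1 t2
    obtain ⟨d3x, -⟩ := slice_diff a3 h3 x t1 t2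
    have E1 := e1 x t1 t2
    have E2 := e2 x t1 t2
    have E3 := e3 x t1 t2
    simp only [dT1, dT2, dX] at E1 E2 E3 ⊢
    rw [hueq3, hueq2, hweq1, hweq2, hu, hw]
    -- expand the composite derivatives
    have hx1 := d1x.hasDerivAt
    have hx2 := d2x.hasDerivAt
    have hx3 := d3x.hasDerivAt
    have ht1 := d1t1.hasDerivAt
    have ht2 := d2t1.hasDerivAt
    -- RHS of E1: deriv (fun x' => a2 - a1^2) x
    have r1 : deriv (fun x' => a2 x' t1 t2 - a1 x' t1 t2 ^ 2) x
        = deriv (fun x' => a2 x' t1 t2) x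
          - 2 * a1 x t1 t2 * deriv (fun x' => a1 x' t1 t2) x := by
      have := (hx2.sub (hx1.pow 2)).deriv
      exact this.trans (by norm_num <;> ring)
    have r2 : deriv (fun x' => a3 x' t1 t2 - a1 x' t1 t2 * a2 x' t1 t2) x
        = deriv (fun x' => a3 x' t1 t2) x
          - (deriv (fun x' => a1 x' t1 t2) x * a2 x t1 t2
             + a1 x t1 t2 * deriv (fun x' => a2 x' t1 t2) x) := by
      have := (hx3.sub (hx1.mul hx2)).deriv
      exact this
    have r3 : deriv (fun x' => a3 x' t1 t2 - 2 * a1 x' t1 t2 * a2 x' t1 t2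
          + a1 x' t1 t2 ^ 3) x
        = deriv (fun x' => a3 x' t1 t2) x
          - 2 * (deriv (fun x' => a1 x' t1 t2) x * a2 x t1 t2
             + a1 x t1 t2 * deriv (fun x' => a2 x' t1 t2) x)
          + 3 * a1 x t1 t2 ^ 2 * deriv (fun x' => a1 x' t1 t2) x := by
      have := ((hx3.sub (((hx1.const_mul 2).mul hx2))).add (hx1.pow 3)).deriv
      exact this.trans (by norm_num <;> ring)
    have rt : deriv (fun s => a2 x s t2 - a1 x s t2 ^ 2) t1
        = deriv (fun s => a2 x s t2) t1
          - 2 * a1 x t1 t2 * deriv (fun s => a1 x s t2) t1 := by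
      have := (ht2.sub (ht1.pow 2)).deriv
      exact this.trans (by norm_num <;> ring)
    rw [r1] at E1
    rw [r2] at E2
    rw [E3, r3, rt, r1, E1, E2]
    ring
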